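/- For all p in the open interval (0,1), the derivative of t2(p) = 2(7 + 12p + 9p²)/(3 + 6p + 18p³ − 27p⁴) satisfies t2′(p) = (p − 1/3) · 4 (1 − 6p + 36p² + 54p³ + 27p⁴) / ((p − 1)² (3p + 1)² (3p² + 1)²), and moreover the polynomial 1 − 6p + 36p² + 54p³ + 27p⁴ = (1 − 3p)² + 27p² + 54p³ + 27p⁴ is strictly positive on (0,1). Consequently t2 is strictly decreasing on (0,1/3) and strictly increasing on (1/3,1). -/

import Mathlib

/-- Social distancing of three agents on `C₃` with `D = 1`: the expected
absorption time from two agents at one node and one at another is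
`t2 p = 2(7 + 12p + 9p²) / (3 + 6p + 18p³ - 27p⁴)`.  For `p ∈ (0,1)` its
derivative is `(p - 1/3) · 4(1 - 6p + 36p² + 54p³ + 27p⁴) /
((p - 1)² (3p + 1)² (3p² + 1)²)`; the quartic `1 - 6p + 36p² + 54p³ + 27p⁴`
equals `(1 - 3p)² + 27p² + 54p³ + 27p⁴` and is strictly positive on `(0,1)`.
Consequently `t2` is strictly decreasing on `(0,1/3)` and strictly increasing
on `(1/3,1)`. -/
theorem social_distance_C3_t2_deriv
    (t2 : ℝ → ℝ)
    (ht2 : ∀ p, t2 p = 2 * (7 + 12 * p + 9 * p ^ 2) /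
      (3 + 6 * p + 18 * p ^ 3 - 27 * p ^ 4)) :
    (∀ p ∈ Set.Ioo (0 : ℝ) 1,
      HasDerivAt t2
        ((p - 1 / 3) * (4 * (1 - 6 * p + 36 * p ^ 2 + 54 * p ^ 3 + 27 * p ^ 4)) /
          ((p - 1) ^ 2 * (3 * p + 1) ^ 2 * (3 * p ^ 2 + 1) ^ 2)) p) ∧
    (∀ p ∈ Set.Ioo (0 : ℝ) 1,
      1 - 6 * p + 36 * p ^ 2 + 54 * p ^ 3 + 27 * p ^ 4 =
        (1 - 3 * p) ^ 2 + 27 * p ^ 2 + 54 * p ^ 3 + 27 * p ^ 4 ∧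
      0 < 1 - 6 * p + 36 * p ^ 2 + 54 * p ^ 3 + 27 * p ^ 4) ∧
    StrictAntiOn t2 (Set.Ioo (0 : ℝ) (1 / 3)) ∧
    StrictMonoOn t2 (Set.Ioo (1 / 3 : ℝ) 1) := by
  have ht2' : t2 = fun p => 2 * (7 + 12 * p + 9 * p ^ 2) /
      (3 + 6 * p + 18 * p ^ 3 - 27 * p ^ 4) := funext ht2
  subst ht2'
  have hderiv : ∀ p ∈ Set.Ioo (0 : ℝ) 1,
      HasDerivAt (fun p => 2 * (7 + 12 * p + 9 * p ^ 2) /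
        (3 + 6 * p + 18 * p ^ 3 - 27 * p ^ 4))
        ((p - 1 / 3) * (4 * (1 - 6 * p + 36 * p ^ 2 + 54 * p ^ 3 + 27 * p ^ 4)) /
          ((p - 1) ^ 2 * (3 * p + 1) ^ 2 * (3 * p ^ 2 + 1) ^ 2)) p := by
    intro p hp
    obtain ⟨hp0, hp1⟩ := hp
    have h1 : p - 1 ≠ 0 := by linarith
    have h2 : 3 * p + 1 ≠ 0 := by nlinarith
    have h3 : 3 * p ^ 2 + 1 ≠ 0 := by nlinarith [sq_nonneg p]
    have hDne : 3 + 6 * p + 18 * p ^ 3 - 27 * p ^ 4 ≠ 0 := by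
      have : 3 + 6 * p + 18 * p ^ 3 - 27 * p ^ 4
          = -3 * ((p - 1) * ((3 * p + 1) * (3 * p ^ 2 + 1))) := by ring
      rw [this]
      simp [h1, h2, h3]
    have hx : HasDerivAt (fun x : ℝ => x) 1 p := hasDerivAt_id p
    have hx2 : HasDerivAt (fun x : ℝ => x ^ 2) (2 * p) p := by
      simpa using hasDerivAt_pow 2 p
    have hx3 : HasDerivAt (fun x : ℝ => x ^ 3) (3 * p ^ 2) p := by
      simpa using hasDerivAt_pow 3 p
    have hx4 : HasDerivAt (fun x : ℝ => x ^ 4) (4 * p ^ 3) p := by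
      simpa using hasDerivAt_pow 4 p
    have hN : HasDerivAt (fun x : ℝ => 2 * (7 + 12 * x + 9 * x ^ 2))
        (2 * (0 + 12 * 1 + 9 * (2 * p))) p :=
      (((hasDerivAt_const p (7 : ℝ)).add (hx.const_mul 12)).add
        (hx2.const_mul 9)).const_mul 2
    have hD : HasDerivAt (fun x : ℝ => 3 + 6 * x + 18 * x ^ 3 - 27 * x ^ 4)
        (0 + 6 * 1 + 18 * (3 * p ^ 2) - 27 * (4 * p ^ 3)) p :=
      (((hasDerivAt_const p (3 : ℝ)).add (hx.const_mul 6)).add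
        (hx3.const_mul 18)).sub (hx4.const_mul 27)
    have hQ := hN.div hD hDne
    refine hQ.congr_deriv ?_
    rw [div_eq_div_iff (pow_ne_zero 2 hDne)
      (mul_ne_zero (mul_ne_zero (pow_ne_zero 2 h1) (pow_ne_zero 2 h2)) (pow_ne_zero 2 h3))]
    ring
  refine ⟨hderiv, ?_, ?_, ?_⟩
  · intro p hp
    constructor
    · ring
    · nlinarith [sq_nonneg (1 - 3 * p), hp.1, sq_nonneg p]
  · apply strictAntiOn_of_deriv_neg (convex_Ioo _ _)
    · intro x hx
      have hx' : x ∈ Set.Ioo (0 : ℝ) 1 := ⟨hx.1, by linarith [hx.2]⟩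
      exact ((hderiv x hx').differentiableAt.continuousAt).continuousWithinAt
    · intro x hx
      rw [interior_Ioo] at hx
      have hx' : x ∈ Set.Ioo (0 : ℝ) 1 := ⟨hx.1, by linarith [hx.2]⟩
      rw [(hderiv x hx').deriv]
      apply div_neg_of_neg_of_pos
      · have hQpos : 0 < 1 - 6 * x + 36 * x ^ 2 + 54 * x ^ 3 + 27 * x ^ 4 := by
          nlinarith [sq_nonneg (1 - 3 * x), hx.1, sq_nonneg x]
        nlinarith [hx.2, hQpos]
      · have e1 : (x - 1) ^ 2 = (1 - x) ^ 2 := by ring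
        rw [e1]
        have ha : (0:ℝ) < 1 - x := by linarith [hx'.2]
        have hb : (0:ℝ) < 3 * x + 1 := by linarith [hx'.1]
        have hc : (0:ℝ) < 3 * x ^ 2 + 1 := by nlinarith [sq_nonneg x]
        exact mul_pos (mul_pos (pow_pos ha 2) (pow_pos hb 2)) (pow_pos hc 2)
  · apply strictMonoOn_of_deriv_pos (convex_Ioo _ _)
    · intro x hx
      have hx' : x ∈ Set.Ioo (0 : ℝ) 1 := ⟨by linarith [hx.1], hx.2⟩
      exact ((hderiv x hx').differentiableAt.continuousAt).continuousWithinAt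
    · intro x hx
      rw [interior_Ioo] at hx
      have hx' : x ∈ Set.Ioo (0 : ℝ) 1 := ⟨by linarith [hx.1], hx.2⟩
      rw [(hderiv x hx').deriv]
      apply div_pos
      · have hQpos : 0 < 1 - 6 * x + 36 * x ^ 2 + 54 * x ^ 3 + 27 * x ^ 4 := by
          nlinarith [sq_nonneg (1 - 3 * x), hx'.1, sq_nonneg x]
        nlinarith [hx.1, hQpos]
      · have e1 : (x - 1) ^ 2 = (1 - x) ^ 2 := by ring
        rw [e1]
        have ha : (0:ℝ) < 1 - x := by linarith [hx'.2]
        have hb : (0:ℝ) < 3 * x + 1 := by linarith [hx'.1]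
        have hc : (0:ℝ) < 3 * x ^ 2 + 1 := by nlinarith [sq_nonneg x]
        exact mul_pos (mul_pos (pow_pos ha 2) (pow_pos hb 2)) (pow_pos hc 2)
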